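/- For each integer k ≥ 1 there is a constant C_k, depending only on k, with the following property: for every integer q ≥ 2, letting P_q = {(r cos(πm/(2q)), r sin(πm/(2q))) : r, m ∈ ℤ, q/2 ≤ r ≤ q, 0 ≤ m ≤ q} ⊂ ℝ², the number of distinct area types of (k+1)-point configurations with all points in P_q, i.e. the cardinality of the set {(x^i·x^{j⊥})_{1≤i<j≤k+1} : x¹,…,x^{k+1} ∈ P_q} ⊂ ℝ^{k(k+1)/2}, is at most C_k q^{2k+1}. -/

import Mathlib

open MeasureTheory Real
open scoped ENNReal

noncomputable section

/-- The plane `ℝ²` with the Euclidean norm. -/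
abbrev Plane : Type := EuclideanSpace ℝ (Fin 2)

/-- The point `(a, b) ∈ ℝ²`. -/
def e2 (a b : ℝ) : Plane := (WithLp.equiv 2 (Fin 2 → ℝ)).symm ![a, b]

/-- The signed area `x · y^⊥`, where `y^⊥ = (−y₂, y₁)`. -/
def sarea (x y : Plane) : ℝ := x 0 * (-(y 1)) + x 1 * y 0

/-- `P_q = {(r cos(πm/(2q)), r sin(πm/(2q))) : r, m ∈ ℤ, q/2 ≤ r ≤ q, 0 ≤ m ≤ q}`, the
image of the lattice points `ℤ² ∩ ([q/2, q] × [0, q])` under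
`(r, m) ↦ (r cos(πm/(2q)), r sin(πm/(2q)))`. -/
def Pq (q : ℕ) : Set Plane :=
  {p | ∃ r m : ℤ, (q : ℝ) / 2 ≤ (r : ℝ) ∧ (r : ℝ) ≤ q ∧ 0 ≤ m ∧ (m : ℝ) ≤ q ∧
    p = e2 ((r : ℝ) * Real.cos (Real.pi * m / (2 * q)))
           ((r : ℝ) * Real.sin (Real.pi * m / (2 * q)))}

/-- The set of area types `(x^i·x^{j⊥})_{i<j} ∈ ℝ^{k(k+1)/2}` of `(k+1)`-point
configurations with all points in `S ⊆ ℝ²`, indexed by the pairs `i < j`. -/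
def areaTypes (k : ℕ) (S : Set Plane) :
    Set ({p : Fin (k + 1) × Fin (k + 1) // p.1 < p.2} → ℝ) :=
  {v | ∃ x : Fin (k + 1) → Plane, (∀ i, x i ∈ S) ∧
    ∀ p, v p = sarea (x p.1.1) (x p.1.2)}

/-- For each `k ≥ 1` there is a constant `C_k`, depending only on `k`, such that for
every `q ≥ 2` the number of distinct area types of `(k+1)`-point configurations with
all points in `P_q` is at most `C_k q^{2k+1}`. -/
theorem statement17 (k : ℕ) (hk : 1 ≤ k) :
    ∃ Ck : ℝ, 0 < Ck ∧ ∀ q : ℕ, 2 ≤ q →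
      (areaTypes k (Pq q)).Finite ∧
      ((areaTypes k (Pq q)).ncard : ℝ) ≤ Ck * (q : ℝ) ^ (2 * k + 1) := by
  refine ⟨2 ^ (k + 1) * 3 ^ k, by positivity, fun q hq => ?_⟩
  have hq0 : (0:ℝ) < (q:ℝ) := by
    have : (0:ℕ) < q := by omega
    exact_mod_cast this
  set D : (Fin k → ℤ) → Fin (k + 1) → ℤ := fun d => Fin.cases 0 d with hDdef
  set f : ((Fin (k + 1) → ℤ) × (Fin k → ℤ)) →
      ({p : Fin (k + 1) × Fin (k + 1) // p.1 < p.2} → ℝ) :=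
    fun rd p => (rd.1 p.1.1 : ℝ) * (rd.1 p.1.2 : ℝ) *
      Real.sin (Real.pi * ((D rd.2 p.1.1 : ℝ) - (D rd.2 p.1.2 : ℝ)) / (2 * q)) with hfdef
  set F : Finset ((Fin (k + 1) → ℤ) × (Fin k → ℤ)) :=
    (Finset.Icc (fun _ => 0) (fun _ => (q:ℤ))) ×ˢ
      (Finset.Icc (fun _ => -(q:ℤ)) (fun _ => (q:ℤ))) with hFdef
  have hsub : areaTypes k (Pq q) ⊆ ↑(F.image f) := by
    rintro v ⟨x, hx, hv⟩
    choose r m hr1 hr2 hm1 hm2 hxe using hx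
    have hDval : ∀ i, D (fun j => m j.succ - m 0) i = m i - m 0 := by
      intro i
      refine Fin.cases ?_ (fun j => ?_) i
      · simp [hDdef]
      · simp [hDdef]
    have hri0 : ∀ i, (0:ℤ) ≤ r i := by
      intro i
      have : (0:ℝ) ≤ (r i : ℝ) := le_trans (by positivity) (hr1 i)
      exact_mod_cast this
    have hriq : ∀ i, r i ≤ (q:ℤ) := by
      intro i; exact_mod_cast hr2 i
    have hmq : ∀ i, m i ≤ (q:ℤ) := by
      intro i; exact_mod_cast hm2 i
    simp only [Finset.coe_image, Set.mem_image, Finset.mem_coe]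
    refine ⟨(fun i => r i, fun j => m j.succ - m 0), ?_, ?_⟩
    · simp only [hFdef, Finset.mem_product, Finset.mem_Icc, Pi.le_def]
      refine ⟨⟨fun i => hri0 i, fun i => hriq i⟩, fun j => ?_, fun j => ?_⟩
      · have := hm1 j.succ; have := hmq 0; omega
      · have := hm1 0; have := hmq j.succ; omega
    · funext p
      obtain ⟨⟨i, j⟩, hij⟩ := p
      have hvi := hv ⟨(i, j), hij⟩
      rw [hfdef]
      simp only
      rw [hDval i, hDval j, hvi, hxe i, hxe j]
      have harg : Real.pi * (((m i - m 0 : ℤ) : ℝ) - ((m j - m 0 : ℤ) : ℝ)) / (2 * q)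
          = Real.pi * (m i) / (2 * q) - Real.pi * (m j) / (2 * q) := by
        push_cast; ring
      rw [harg, Real.sin_sub]
      simp only [sarea, e2, WithLp.equiv_symm_apply, PiLp.toLp_apply]
      simp only [Matrix.cons_val_zero, Matrix.cons_val_one, Matrix.head_cons]
      ring
  have hfin : (areaTypes k (Pq q)).Finite :=
    Set.Finite.subset (F.image f).finite_toSet hsub
  refine ⟨hfin, ?_⟩
  have h1 : (areaTypes k (Pq q)).ncard ≤ (F.image f).card := by
    rw [← Set.ncard_coe_finset]
    exact Set.ncard_le_ncard hsub (F.image f).finite_toSet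
  have h2 : (F.image f).card ≤ F.card := Finset.card_image_le
  have hFcard : F.card = (q + 1) ^ (k + 1) * (2 * q + 1) ^ k := by
    rw [hFdef, Finset.card_product, Pi.card_Icc, Pi.card_Icc]
    simp only [Int.card_Icc, Finset.prod_const, Finset.card_univ, Fintype.card_fin]
    congr 2 <;> omega
  have hnat : (q + 1) ^ (k + 1) * (2 * q + 1) ^ k ≤ 2 ^ (k + 1) * 3 ^ k * q ^ (2 * k + 1) := by
    calc (q + 1) ^ (k + 1) * (2 * q + 1) ^ k
        ≤ (2 * q) ^ (k + 1) * (3 * q) ^ k :=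
          Nat.mul_le_mul (Nat.pow_le_pow_left (by omega) _)
            (Nat.pow_le_pow_left (by omega) _)
      _ = 2 ^ (k + 1) * 3 ^ k * (q ^ (k + 1) * q ^ k) := by
          rw [mul_pow, mul_pow]; ring
      _ = 2 ^ (k + 1) * 3 ^ k * q ^ (2 * k + 1) := by
          rw [← pow_add, show k + 1 + k = 2 * k + 1 by omega]
  have h3 : F.card ≤ 2 ^ (k + 1) * 3 ^ k * q ^ (2 * k + 1) := by
    rw [hFcard]; exact hnat
  have hfinal : (areaTypes k (Pq q)).ncard ≤ 2 ^ (k + 1) * 3 ^ k * q ^ (2 * k + 1) :=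
    le_trans h1 (le_trans h2 h3)
  calc ((areaTypes k (Pq q)).ncard : ℝ)
      ≤ ((2 ^ (k + 1) * 3 ^ k * q ^ (2 * k + 1) : ℕ) : ℝ) := by exact_mod_cast hfinal
    _ = 2 ^ (k + 1) * 3 ^ k * (q : ℝ) ^ (2 * k + 1) := by push_cast; ring
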